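/- Let Ω ⊂ ℝ^N be a bounded open set and h : Ω → ℝ continuous with 1 ≤ h⁻ ≤ h⁺ < ∞. Suppose (u_n) is a bounded sequence in L^{h(·)}(Ω) and u_n(x) → u(x) for a.e. x ∈ Ω. Then lim_{n→∞} ( ∫_Ω |u_n|^{h(x)} dx − ∫_Ω |u − u_n|^{h(x)} dx ) = ∫_Ω |u|^{h(x)} dx. -/

import Mathlib

open MeasureTheory Filter Topology Real

lemma BLaux_add_rpow (P p δ a b : ℝ) (hp1 : 1 ≤ p) (hpP : p ≤ P) (hδ : 0 < δ)
    (ha : 0 ≤ a) (hb : 0 ≤ b) :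
    (a + b) ^ p ≤ (1 + δ) ^ P * a ^ p + ((1 + δ) / δ) ^ P * b ^ p := by
  have hp0 : (0:ℝ) < p := lt_of_lt_of_le one_pos hp1
  have hδ1 : (1:ℝ) ≤ 1 + δ := by linarith
  have hq1 : (1:ℝ) ≤ (1 + δ) / δ := by rw [le_div_iff₀ hδ]; linarith
  rcases le_or_gt b (δ * a) with hc | hc
  · have h1 : a + b ≤ (1 + δ) * a := by nlinarith
    have h2 : (a + b) ^ p ≤ ((1 + δ) * a) ^ p :=
      Real.rpow_le_rpow (by positivity) h1 hp0.le
    have h3 : ((1 + δ) * a) ^ p = (1 + δ) ^ p * a ^ p :=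
      Real.mul_rpow (by positivity) ha
    have h4 : (1 + δ) ^ p ≤ (1 + δ) ^ P := Real.rpow_le_rpow_of_exponent_le hδ1 hpP
    have h5 : (0:ℝ) ≤ ((1 + δ) / δ) ^ P * b ^ p := by positivity
    nlinarith [Real.rpow_nonneg ha p]
  · have h1 : a + b ≤ ((1 + δ) / δ) * b := by
      rw [div_mul_eq_mul_div, le_div_iff₀ hδ]; nlinarith
    have h2 : (a + b) ^ p ≤ (((1 + δ) / δ) * b) ^ p :=
      Real.rpow_le_rpow (by positivity) h1 hp0.le
    have h3 : (((1 + δ) / δ) * b) ^ p = ((1 + δ) / δ) ^ p * b ^ p :=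
      Real.mul_rpow (by positivity) hb
    have h4 : ((1 + δ) / δ) ^ p ≤ ((1 + δ) / δ) ^ P :=
      Real.rpow_le_rpow_of_exponent_le hq1 hpP
    have h5 : (0:ℝ) ≤ (1 + δ) ^ P * a ^ p := by positivity
    nlinarith [Real.rpow_nonneg hb p]

lemma BLaux_exists_C (P ε : ℝ) (hP : 1 ≤ P) (hε : 0 < ε) :
    ∃ C : ℝ, 0 ≤ C ∧ ∀ p, 1 ≤ p → p ≤ P → ∀ a b : ℝ, 0 ≤ a → 0 ≤ b →
      (a + b) ^ p ≤ (1 + ε) * a ^ p + C * b ^ p := by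
  have hP0 : (0:ℝ) < P := lt_of_lt_of_le one_pos hP
  set δ : ℝ := (1 + ε) ^ (1 / P) - 1 with hδdef
  have h1lt : 1 < (1 + ε) ^ (1 / P) := by
    rw [Real.one_lt_rpow_iff_of_pos (by linarith)]
    exact Or.inl ⟨by linarith, by positivity⟩
  have hδ : 0 < δ := by
    have : (1:ℝ) < (1 + ε) ^ (1/P) := h1lt
    simp only [hδdef]; linarith
  have hpow : (1 + δ) ^ P = 1 + ε := by
    have h1 : (1:ℝ) + δ = (1 + ε) ^ (1 / P) := by simp [hδdef]
    rw [h1, ← Real.rpow_mul (by linarith : (0:ℝ) ≤ 1 + ε),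
      one_div_mul_cancel (ne_of_gt hP0), Real.rpow_one]
  refine ⟨((1 + δ) / δ) ^ P, by positivity, fun p hp1 hpP a b ha hb => ?_⟩
  have := BLaux_add_rpow P p δ a b hp1 hpP hδ ha hb
  rwa [hpow] at this

lemma BLaux_two_rpow (P p a b : ℝ) (hp1 : 1 ≤ p) (hpP : p ≤ P) (ha : 0 ≤ a) (hb : 0 ≤ b) :
    (a + b) ^ p ≤ 2 ^ P * (a ^ p + b ^ p) := by
  have hp0 : (0:ℝ) < p := lt_of_lt_of_le one_pos hp1
  have h1 : a + b ≤ 2 * max a b := by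
    have := le_max_left a b; have := le_max_right a b; linarith
  have h2 : (a + b) ^ p ≤ (2 * max a b) ^ p :=
    Real.rpow_le_rpow (by positivity) h1 hp0.le
  have h3 : (2 * max a b) ^ p = 2 ^ p * (max a b) ^ p :=
    Real.mul_rpow (by norm_num) (le_max_of_le_left ha)
  have h4 : (2:ℝ) ^ p ≤ 2 ^ P := Real.rpow_le_rpow_of_exponent_le one_le_two hpP
  have h5 : (max a b) ^ p ≤ a ^ p + b ^ p := by
    rcases le_total a b with hab | hab
    · rw [max_eq_right hab]
      have := Real.rpow_nonneg ha p; linarith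
    · rw [max_eq_left hab]
      have := Real.rpow_nonneg hb p; linarith
  have h6 : (0:ℝ) ≤ (max a b) ^ p := Real.rpow_nonneg (le_max_of_le_left ha) p
  have h7 : (0:ℝ) ≤ 2 ^ P := by positivity
  calc (a + b) ^ p ≤ 2 ^ p * (max a b) ^ p := by rw [← h3]; exact h2
    _ ≤ 2 ^ P * (max a b) ^ p := mul_le_mul_of_nonneg_right h4 h6
    _ ≤ 2 ^ P * (a ^ p + b ^ p) := mul_le_mul_of_nonneg_left h5 h7

lemma BLaux_key (P ε : ℝ) (hP : 1 ≤ P) (hε : 0 < ε) :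
    ∃ C : ℝ, 0 ≤ C ∧ ∀ p, 1 ≤ p → p ≤ P → ∀ x y : ℝ,
      |(|x + y| ^ p - |x| ^ p)| ≤ ε * |x| ^ p + C * |y| ^ p := by
  have h2P : (0:ℝ) < 1 + 2 ^ P := by positivity
  set ε' : ℝ := ε / (1 + 2 ^ P) with hε'def
  have hε' : 0 < ε' := by positivity
  have hε'le : ε' ≤ ε := by
    rw [hε'def, div_le_iff₀ h2P]; nlinarith [Real.rpow_nonneg (zero_le_two (α := ℝ)) P, hε.le]
  have hε'2P : ε' * 2 ^ P ≤ ε := by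
    rw [hε'def, div_mul_eq_mul_div, div_le_iff₀ h2P]; nlinarith [Real.rpow_nonneg (zero_le_two (α := ℝ)) P, hε.le]
  obtain ⟨C₁, hC₁0, hC₁⟩ := BLaux_exists_C P ε' hP hε'
  refine ⟨C₁ + ε, by positivity, fun p hp1 hpP x y => ?_⟩
  have hp0 : (0:ℝ) < p := lt_of_lt_of_le one_pos hp1
  have hxn := Real.rpow_nonneg (abs_nonneg x) p
  have hyn := Real.rpow_nonneg (abs_nonneg y) p
  have hxyn := Real.rpow_nonneg (abs_nonneg (x + y)) p
  have hsum : (|x| + |y|) ^ p ≤ (1 + ε') * |x| ^ p + C₁ * |y| ^ p :=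
    hC₁ p hp1 hpP _ _ (abs_nonneg x) (abs_nonneg y)
  have hxy : |x + y| ^ p ≤ (|x| + |y|) ^ p :=
    Real.rpow_le_rpow (abs_nonneg _) (abs_add_le x y) hp0.le
  rw [abs_sub_le_iff]
  constructor
  · -- |x+y|^p - |x|^p ≤ ε|x|^p + C|y|^p
    nlinarith
  · -- |x|^p - |x+y|^p
    have h1 : |x| ≤ |x + y| + |y| := by
      have := abs_add_le (x + y) (-y); simpa using this
    have h2 : |x| ^ p ≤ (|x + y| + |y|) ^ p :=
      Real.rpow_le_rpow (abs_nonneg _) h1 hp0.le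
    have h3 : (|x + y| + |y|) ^ p ≤ (1 + ε') * |x + y| ^ p + C₁ * |y| ^ p :=
      hC₁ p hp1 hpP _ _ (abs_nonneg _) (abs_nonneg _)
    have h4 : (|x| + |y|) ^ p ≤ 2 ^ P * (|x| ^ p + |y| ^ p) :=
      BLaux_two_rpow P p _ _ hp1 hpP (abs_nonneg x) (abs_nonneg y)
    -- |x|^p - |x+y|^p ≤ ε' |x+y|^p + C₁|y|^p ≤ ε' (|x|+|y|)^p + C₁ |y|^p
    have h5 : ε' * |x + y| ^ p ≤ ε' * (2 ^ P * (|x| ^ p + |y| ^ p)) :=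
      mul_le_mul_of_nonneg_left (le_trans hxy h4) hε'.le
    nlinarith [mul_le_mul_of_nonneg_right hε'2P hxn, mul_le_mul_of_nonneg_right hε'2P hyn]


/-- The modular `ρ_p(u) = ∫ |u|^{p(x)} dμ` of variable exponent Lebesgue spaces. -/
noncomputable def modular {α : Type*} [MeasurableSpace α] (μ : Measure α)
    (p : α → ℝ) (u : α → ℝ) : ℝ :=
  ∫ x, |u x| ^ p x ∂μ

/-- The Luxemburg norm `‖u‖_{p(·)} = inf {τ > 0 : ∫ (|u|/τ)^{p(x)} dμ ≤ 1}`. -/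
noncomputable def luxNorm {α : Type*} [MeasurableSpace α] (μ : Measure α)
    (p : α → ℝ) (u : α → ℝ) : ℝ :=
  sInf {τ : ℝ | 0 < τ ∧ ∫ x, (|u x| / τ) ^ p x ∂μ ≤ 1}


/-- **Brezis–Lieb lemma in variable exponent Lebesgue spaces** (Fu):
if `(u_n)` is bounded in `L^{h(·)}(Ω)` and `u_n → u` a.e., then
`∫ |u_n|^{h} − ∫ |u − u_n|^{h} → ∫ |u|^{h}`. -/
theorem brezis_lieb_variable_exponent (N : ℕ) (Ω : Set (EuclideanSpace ℝ (Fin N)))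
    (hΩo : IsOpen Ω) (hΩb : Bornology.IsBounded Ω)
    (h : EuclideanSpace ℝ (Fin N) → ℝ) (hhc : ContinuousOn h Ω)
    (hplus : ℝ) (hh1 : ∀ x ∈ Ω, 1 ≤ h x) (hh2 : ∀ x ∈ Ω, h x ≤ hplus)
    (u : ℕ → EuclideanSpace ℝ (Fin N) → ℝ) (hu : ∀ n, Measurable (u n))
    (hmod : ∀ n, Integrable (fun x => |u n x| ^ h x) (volume.restrict Ω))
    (M : ℝ) (hbdd : ∀ n, luxNorm (volume.restrict Ω) h (u n) ≤ M)
    (ulim : EuclideanSpace ℝ (Fin N) → ℝ) (hulim : Measurable ulim)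
    (hae : ∀ᵐ x ∂(volume.restrict Ω), Tendsto (fun n => u n x) atTop (𝓝 (ulim x))) :
    Tendsto (fun n => (∫ x, |u n x| ^ h x ∂(volume.restrict Ω)) -
        ∫ x, |ulim x - u n x| ^ h x ∂(volume.restrict Ω)) atTop
      (𝓝 (∫ x, |ulim x| ^ h x ∂(volume.restrict Ω))) := by
  set μ := volume.restrict Ω with hμdef
  set P : ℝ := max 1 hplus with hPdef
  have hP1 : (1:ℝ) ≤ P := le_max_left _ _
  -- a.e. facts about the exponent
  have hmemae : ∀ᵐ x ∂μ, x ∈ Ω := ae_restrict_mem hΩo.measurableSet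
  have hPae : ∀ᵐ x ∂μ, 1 ≤ h x ∧ h x ≤ P :=
    hmemae.mono fun x hx => ⟨hh1 x hx, le_trans (hh2 x hx) (le_max_right _ _)⟩
  have hhm : AEMeasurable h μ := hhc.aemeasurable hΩo.measurableSet
  -- measurability
  have hFm : ∀ n, AEMeasurable (fun x => |u n x| ^ h x) μ :=
    fun n => ((hu n).abs.aemeasurable).pow hhm
  have hDm : ∀ n, AEMeasurable (fun x => |ulim x - u n x| ^ h x) μ :=
    fun n => ((hulim.sub (hu n)).abs.aemeasurable).pow hhm
  have hUm : AEMeasurable (fun x => |ulim x| ^ h x) μ :=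
    (hulim.abs.aemeasurable).pow hhm
  -- integrability of the scaled modular integrands
  have hscal : ∀ n, ∀ σ : ℝ, 0 < σ → Integrable (fun x => (|u n x| / σ) ^ h x) μ := by
    intro n σ hσ
    refine Integrable.mono' ((hmod n).const_mul (max 1 ((1 / σ) ^ P)))
      ((((hu n).abs.aemeasurable.div_const σ).pow hhm).aestronglyMeasurable) ?_
    filter_upwards [hPae] with x hx
    obtain ⟨hx1, hxP⟩ := hx
    have h0 : (0:ℝ) ≤ (|u n x| / σ) ^ h x := Real.rpow_nonneg (by positivity) _
    rw [Real.norm_of_nonneg h0, Real.div_rpow (abs_nonneg _) hσ.le, div_eq_mul_inv,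
      ← Real.inv_rpow hσ.le]
    have hσp : σ⁻¹ ^ h x ≤ max 1 ((1 / σ) ^ P) := by
      rcases le_or_gt σ⁻¹ 1 with hc | hc
      · exact le_trans (Real.rpow_le_one (by positivity) hc (by linarith)) (le_max_left _ _)
      · refine le_trans (Real.rpow_le_rpow_of_exponent_le hc.le hxP) ?_
        rw [one_div]; exact le_max_right _ _
    calc |u n x| ^ h x * σ⁻¹ ^ h x ≤ |u n x| ^ h x * max 1 ((1 / σ) ^ P) :=
          mul_le_mul_of_nonneg_left hσp (Real.rpow_nonneg (abs_nonneg _) _)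
      _ = max 1 ((1 / σ) ^ P) * |u n x| ^ h x := mul_comm _ _
  -- the Luxemburg-norm bound gives the scaled modular bound at τ
  set τ : ℝ := max M 0 + 1 with hτdef
  have hτ1 : (1:ℝ) ≤ τ := by have := le_max_right M 0; simp only [hτdef]; linarith
  have hτ0 : (0:ℝ) < τ := by linarith
  have hMτ : M < τ := by have := le_max_left M 0; simp only [hτdef]; linarith
  have hSmem : ∀ n, ∫ x, (|u n x| / τ) ^ h x ∂μ ≤ 1 := by
    intro n
    set σ₀ : ℝ := max 1 ((∫ x, |u n x| ^ h x ∂μ) + 1) with hσ₀def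
    have hσ₀1 : (1:ℝ) ≤ σ₀ := le_max_left _ _
    have hσ₀0 : (0:ℝ) < σ₀ := by linarith
    have hw : ∫ x, (|u n x| / σ₀) ^ h x ∂μ ≤ 1 := by
      have hle : ∀ᵐ x ∂μ, (|u n x| / σ₀) ^ h x ≤ |u n x| ^ h x / σ₀ := by
        filter_upwards [hPae] with x hx
        obtain ⟨hx1, _⟩ := hx
        rw [Real.div_rpow (abs_nonneg _) hσ₀0.le]
        refine div_le_div_of_nonneg_left (Real.rpow_nonneg (abs_nonneg _) _) hσ₀0 ?_
        calc σ₀ = σ₀ ^ (1:ℝ) := (Real.rpow_one σ₀).symm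
          _ ≤ σ₀ ^ h x := Real.rpow_le_rpow_of_exponent_le hσ₀1 hx1
      calc ∫ x, (|u n x| / σ₀) ^ h x ∂μ ≤ ∫ x, |u n x| ^ h x / σ₀ ∂μ :=
            integral_mono_of_nonneg
              (Eventually.of_forall fun x => Real.rpow_nonneg (by positivity) _)
              ((hmod n).div_const σ₀) hle
        _ = (∫ x, |u n x| ^ h x ∂μ) / σ₀ := integral_div σ₀ _
        _ ≤ 1 := by
            rw [div_le_one hσ₀0]
            have : (∫ x, |u n x| ^ h x ∂μ) + 1 ≤ σ₀ := le_max_right _ _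
            linarith
    have hb' := hbdd n
    simp only [luxNorm, ← hμdef] at hb'
    have hne : Set.Nonempty {σ : ℝ | 0 < σ ∧ ∫ x, (|u n x| / σ) ^ h x ∂μ ≤ 1} :=
      ⟨σ₀, hσ₀0, hw⟩
    have hbb : BddBelow {σ : ℝ | 0 < σ ∧ ∫ x, (|u n x| / σ) ^ h x ∂μ ≤ 1} :=
      ⟨0, fun s hs => hs.1.le⟩
    have hlt : sInf {σ : ℝ | 0 < σ ∧ ∫ x, (|u n x| / σ) ^ h x ∂μ ≤ 1} < τ :=
      lt_of_le_of_lt hb' hMτ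
    obtain ⟨σ, hσS, hστ⟩ := (csInf_lt_iff hbb hne).1 hlt
    obtain ⟨hσpos, hσint⟩ := hσS
    have hmono : ∀ᵐ x ∂μ, (|u n x| / τ) ^ h x ≤ (|u n x| / σ) ^ h x := by
      filter_upwards [hPae] with x hx
      exact Real.rpow_le_rpow (by positivity)
        (div_le_div_of_nonneg_left (abs_nonneg _) hσpos hστ.le) (by linarith [hx.1])
    calc ∫ x, (|u n x| / τ) ^ h x ∂μ ≤ ∫ x, (|u n x| / σ) ^ h x ∂μ :=
          integral_mono_of_nonneg
            (Eventually.of_forall fun x => Real.rpow_nonneg (by positivity) _)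
            (hscal n σ hσpos) hmono
      _ ≤ 1 := hσint
  set K : ℝ := τ ^ P with hKdef
  have hK0 : (0:ℝ) ≤ K := Real.rpow_nonneg hτ0.le P
  have hK : ∀ n, ∫ x, |u n x| ^ h x ∂μ ≤ K := by
    intro n
    have hle : ∀ᵐ x ∂μ, |u n x| ^ h x ≤ K * (|u n x| / τ) ^ h x := by
      filter_upwards [hPae] with x hx
      obtain ⟨hx1, hxP⟩ := hx
      have he : |u n x| ^ h x = (|u n x| / τ) ^ h x * τ ^ h x := by
        rw [Real.div_rpow (abs_nonneg _) hτ0.le, div_mul_cancel₀]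
        exact ne_of_gt (Real.rpow_pos_of_pos hτ0 _)
      rw [he, mul_comm]
      exact mul_le_mul_of_nonneg_right (Real.rpow_le_rpow_of_exponent_le hτ1 hxP)
        (Real.rpow_nonneg (by positivity) _)
    calc ∫ x, |u n x| ^ h x ∂μ ≤ ∫ x, K * (|u n x| / τ) ^ h x ∂μ :=
          integral_mono_of_nonneg
            (Eventually.of_forall fun x => Real.rpow_nonneg (abs_nonneg _) _)
            ((hscal n τ hτ0).const_mul K) hle
      _ = K * ∫ x, (|u n x| / τ) ^ h x ∂μ := integral_const_mul K _
      _ ≤ K * 1 := mul_le_mul_of_nonneg_left (hSmem n) hK0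
      _ = K := mul_one K
  -- pointwise a.e. convergence of the modular integrands
  have htend : ∀ᵐ x ∂μ,
      Tendsto (fun n => |u n x| ^ h x) atTop (𝓝 (|ulim x| ^ h x)) ∧
      Tendsto (fun n => |ulim x - u n x| ^ h x) atTop (𝓝 0) := by
    filter_upwards [hae, hPae] with x hx hp
    obtain ⟨hx1, hxP⟩ := hp
    have hp0 : (0:ℝ) < h x := by linarith
    have hc : ∀ t : ℝ, ContinuousAt (fun s : ℝ => |s| ^ h x) t := fun t =>
      (Real.continuousAt_rpow_const _ _ (Or.inr hp0.le)).comp continuous_abs.continuousAt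
    constructor
    · exact ((hc (ulim x)).tendsto).comp hx
    · have hz : Tendsto (fun n => ulim x - u n x) atTop (𝓝 0) := by
        simpa using (tendsto_const_nhds (x := ulim x)).sub hx
      have := ((hc 0).tendsto).comp hz
      simpa [Function.comp_def, Real.zero_rpow hp0.ne'] using this
  -- integrability of |ulim|^h and bound of its integral by K
  have hUl : ∫⁻ x, ENNReal.ofReal (|ulim x| ^ h x) ∂μ ≤ ENNReal.ofReal K := by
    have hlin : ∀ n, ∫⁻ x, ENNReal.ofReal (|u n x| ^ h x) ∂μ ≤ ENNReal.ofReal K := by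
      intro n
      rw [← ofReal_integral_eq_lintegral_ofReal (hmod n)
        (Eventually.of_forall fun x => Real.rpow_nonneg (abs_nonneg _) _)]
      exact ENNReal.ofReal_le_ofReal (hK n)
    have hliminf : ∀ᵐ x ∂μ, ENNReal.ofReal (|ulim x| ^ h x) =
        Filter.liminf (fun n => ENNReal.ofReal (|u n x| ^ h x)) atTop := by
      filter_upwards [htend] with x hx
      exact ((ENNReal.continuous_ofReal.continuousAt.tendsto).comp hx.1).liminf_eq.symm
    calc ∫⁻ x, ENNReal.ofReal (|ulim x| ^ h x) ∂μ
        = ∫⁻ x, Filter.liminf (fun n => ENNReal.ofReal (|u n x| ^ h x)) atTop ∂μ :=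
          lintegral_congr_ae hliminf
      _ ≤ Filter.liminf (fun n => ∫⁻ x, ENNReal.ofReal (|u n x| ^ h x) ∂μ) atTop :=
          lintegral_liminf_le' (fun n => (hFm n).ennreal_ofReal)
      _ ≤ ENNReal.ofReal K := by
          refine le_trans (Filter.liminf_le_liminf (Eventually.of_forall hlin)) ?_
          simp
  have hU : Integrable (fun x => |ulim x| ^ h x) μ := by
    refine ⟨hUm.aestronglyMeasurable, ?_⟩
    rw [hasFiniteIntegral_iff_norm]
    have : ∫⁻ x, ENNReal.ofReal ‖|ulim x| ^ h x‖ ∂μ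
        = ∫⁻ x, ENNReal.ofReal (|ulim x| ^ h x) ∂μ := by
      refine lintegral_congr fun x => ?_
      rw [Real.norm_of_nonneg (Real.rpow_nonneg (abs_nonneg _) _)]
    rw [this]
    exact lt_of_le_of_lt hUl ENNReal.ofReal_lt_top
  have hUK : ∫ x, |ulim x| ^ h x ∂μ ≤ K := by
    have he : ENNReal.ofReal (∫ x, |ulim x| ^ h x ∂μ)
        = ∫⁻ x, ENNReal.ofReal (|ulim x| ^ h x) ∂μ :=
      ofReal_integral_eq_lintegral_ofReal hU
        (Eventually.of_forall fun x => Real.rpow_nonneg (abs_nonneg _) _)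
    have := le_trans he.le hUl
    rwa [ENNReal.ofReal_le_ofReal_iff hK0] at this
  -- integrability of the difference modular integrands and uniform bound
  set K' : ℝ := 2 ^ P * (K + K) with hK'def
  have h2P0 : (0:ℝ) ≤ 2 ^ P := Real.rpow_nonneg zero_le_two P
  have hK'0 : (0:ℝ) ≤ K' := by positivity
  have hDdom : ∀ n, ∀ᵐ x ∂μ,
      |ulim x - u n x| ^ h x ≤ 2 ^ P * (|ulim x| ^ h x + |u n x| ^ h x) := by
    intro n
    filter_upwards [hPae] with x hx
    obtain ⟨hx1, hxP⟩ := hx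
    calc |ulim x - u n x| ^ h x ≤ (|ulim x| + |u n x|) ^ h x :=
          Real.rpow_le_rpow (abs_nonneg _) (abs_sub _ _) (by linarith)
      _ ≤ 2 ^ P * (|ulim x| ^ h x + |u n x| ^ h x) :=
          BLaux_two_rpow P (h x) _ _ hx1 hxP (abs_nonneg _) (abs_nonneg _)
  have hD : ∀ n, Integrable (fun x => |ulim x - u n x| ^ h x) μ := by
    intro n
    refine Integrable.mono' ((hU.add (hmod n)).const_mul (2 ^ P))
      (hDm n).aestronglyMeasurable ?_
    filter_upwards [hDdom n] with x hx
    rwa [Real.norm_of_nonneg (Real.rpow_nonneg (abs_nonneg _) _)]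
  have hDK : ∀ n, ∫ x, |ulim x - u n x| ^ h x ∂μ ≤ K' := by
    intro n
    calc ∫ x, |ulim x - u n x| ^ h x ∂μ
        ≤ ∫ x, 2 ^ P * (|ulim x| ^ h x + |u n x| ^ h x) ∂μ :=
          integral_mono_of_nonneg
            (Eventually.of_forall fun x => Real.rpow_nonneg (abs_nonneg _) _)
            ((hU.add (hmod n)).const_mul (2 ^ P)) (hDdom n)
      _ = 2 ^ P * ((∫ x, |ulim x| ^ h x ∂μ) + ∫ x, |u n x| ^ h x ∂μ) := by
          rw [integral_const_mul, integral_add hU (hmod n)]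
      _ ≤ K' := by
          rw [hK'def]
          exact mul_le_mul_of_nonneg_left (add_le_add hUK (hK n)) h2P0
  -- the final ε-δ argument
  rw [Metric.tendsto_atTop]
  intro δ hδ
  set ε : ℝ := δ / (2 * (K' + 1)) with hεdef
  have hεpos : 0 < ε := by positivity
  have hεK' : ε * K' ≤ δ / 2 := by
    rw [hεdef, div_mul_eq_mul_div, div_le_div_iff₀ (by positivity) (by norm_num)]
    nlinarith
  obtain ⟨C, hC0, hCkey⟩ := BLaux_key P ε hP1 hεpos
  -- the pointwise Brezis-Lieb inequality
  have hgbd : ∀ n, ∀ᵐ x ∂μ,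
      |(|u n x| ^ h x - |ulim x - u n x| ^ h x - |ulim x| ^ h x)| ≤
        ε * |ulim x - u n x| ^ h x + (C + 1) * |ulim x| ^ h x := by
    intro n
    filter_upwards [hPae] with x hx
    obtain ⟨hx1, hxP⟩ := hx
    have hkey := hCkey (h x) hx1 hxP (u n x - ulim x) (ulim x)
    rw [sub_add_cancel, abs_sub_comm (u n x) (ulim x)] at hkey
    have hUx : (0:ℝ) ≤ |ulim x| ^ h x := Real.rpow_nonneg (abs_nonneg _) _
    have htri : |(|u n x| ^ h x - |ulim x - u n x| ^ h x - |ulim x| ^ h x)| ≤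
        |(|u n x| ^ h x - |ulim x - u n x| ^ h x)| + |ulim x| ^ h x := by
      have := abs_sub (|u n x| ^ h x - |ulim x - u n x| ^ h x) (|ulim x| ^ h x)
      rwa [abs_of_nonneg hUx] at this
    have h2 : |(|u n x| ^ h x - |ulim x - u n x| ^ h x)| ≤
        ε * |ulim x - u n x| ^ h x + C * |ulim x| ^ h x := hkey
    linarith
  -- the dominated part W
  set W : ℕ → EuclideanSpace ℝ (Fin N) → ℝ := fun n x =>
    max (|(|u n x| ^ h x - |ulim x - u n x| ^ h x - |ulim x| ^ h x)|
      - ε * |ulim x - u n x| ^ h x) 0 with hWdef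
  have hWm : ∀ n, AEStronglyMeasurable (W n) μ := by
    intro n
    exact (((measurable_abs.comp_aemeasurable (((hFm n).sub (hDm n)).sub hUm))).sub
      ((hDm n).const_mul ε)).max aemeasurable_const |>.aestronglyMeasurable
  have hWbd : ∀ n, ∀ᵐ x ∂μ, ‖W n x‖ ≤ (C + 1) * |ulim x| ^ h x := by
    intro n
    filter_upwards [hgbd n] with x hx
    have hW0 : 0 ≤ W n x := le_max_right _ _
    rw [Real.norm_of_nonneg hW0, hWdef]
    have hDx : (0:ℝ) ≤ ε * |ulim x - u n x| ^ h x := by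
      have := Real.rpow_nonneg (abs_nonneg (ulim x - u n x)) (h x); positivity
    have hUx : (0:ℝ) ≤ (C + 1) * |ulim x| ^ h x := by
      have := Real.rpow_nonneg (abs_nonneg (ulim x)) (h x); positivity
    exact max_le (by linarith) hUx
  have hWtend : ∀ᵐ x ∂μ, Tendsto (fun n => W n x) atTop (𝓝 0) := by
    filter_upwards [htend] with x hx
    obtain ⟨hF, hDt⟩ := hx
    have h1 : Tendsto (fun n => |u n x| ^ h x - |ulim x - u n x| ^ h x - |ulim x| ^ h x)
        atTop (𝓝 0) := by
      have := (hF.sub hDt).sub (tendsto_const_nhds (x := |ulim x| ^ h x))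
      simpa using this
    have h2 : Tendsto (fun n =>
        |(|u n x| ^ h x - |ulim x - u n x| ^ h x - |ulim x| ^ h x)|
          - ε * |ulim x - u n x| ^ h x) atTop (𝓝 0) := by
      have := h1.abs.sub ((hDt.const_mul ε))
      simpa using this
    have := h2.max (tendsto_const_nhds (x := (0:ℝ)))
    simpa using this
  have hWint : ∀ n, Integrable (W n) μ := fun n =>
    Integrable.mono' (hU.const_mul (C + 1)) (hWm n) (hWbd n)
  have hWI : Tendsto (fun n => ∫ x, W n x ∂μ) atTop (𝓝 0) := by
    have := tendsto_integral_of_dominated_convergence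
      (fun x => (C + 1) * |ulim x| ^ h x) hWm (hU.const_mul (C + 1)) hWbd hWtend
    simpa using this
  rw [Metric.tendsto_atTop] at hWI
  obtain ⟨Nn, hNn⟩ := hWI (δ / 2) (by positivity)
  refine ⟨Nn, fun n hn => ?_⟩
  have hWn : ∫ x, W n x ∂μ < δ / 2 := by
    have := hNn n hn
    rw [Real.dist_eq, sub_zero] at this
    exact lt_of_le_of_lt (le_abs_self _) this
  -- assemble
  have hgint : Integrable (fun x =>
      |(|u n x| ^ h x - |ulim x - u n x| ^ h x - |ulim x| ^ h x)|) μ :=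
    (((hmod n).sub (hD n)).sub hU).abs
  have hgle : ∀ᵐ x ∂μ,
      |(|u n x| ^ h x - |ulim x - u n x| ^ h x - |ulim x| ^ h x)| ≤
        W n x + ε * |ulim x - u n x| ^ h x := by
    refine Eventually.of_forall fun x => ?_
    have := le_max_left (|(|u n x| ^ h x - |ulim x - u n x| ^ h x - |ulim x| ^ h x)|
      - ε * |ulim x - u n x| ^ h x) 0
    have hW : W n x = max _ 0 := rfl
    linarith [this]
  have hgI : ∫ x, |(|u n x| ^ h x - |ulim x - u n x| ^ h x - |ulim x| ^ h x)| ∂μ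
      ≤ (∫ x, W n x ∂μ) + ε * K' := by
    calc ∫ x, |(|u n x| ^ h x - |ulim x - u n x| ^ h x - |ulim x| ^ h x)| ∂μ
        ≤ ∫ x, (W n x + ε * |ulim x - u n x| ^ h x) ∂μ :=
          integral_mono_ae hgint ((hWint n).add ((hD n).const_mul ε)) hgle
      _ = (∫ x, W n x ∂μ) + ε * ∫ x, |ulim x - u n x| ^ h x ∂μ := by
          rw [integral_add (hWint n) ((hD n).const_mul ε), integral_const_mul]
      _ ≤ (∫ x, W n x ∂μ) + ε * K' := by
          have := mul_le_mul_of_nonneg_left (hDK n) hεpos.le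
          linarith
  have hsplit : (∫ x, |u n x| ^ h x ∂μ) - (∫ x, |ulim x - u n x| ^ h x ∂μ)
      - (∫ x, |ulim x| ^ h x ∂μ)
      = ∫ x, (|u n x| ^ h x - |ulim x - u n x| ^ h x - |ulim x| ^ h x) ∂μ := by
    rw [eq_comm]
    calc ∫ x, (|u n x| ^ h x - |ulim x - u n x| ^ h x - |ulim x| ^ h x) ∂μ
        = (∫ x, (|u n x| ^ h x - |ulim x - u n x| ^ h x) ∂μ) - ∫ x, |ulim x| ^ h x ∂μ :=
          integral_sub ((hmod n).sub (hD n)) hU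
      _ = (∫ x, |u n x| ^ h x ∂μ) - (∫ x, |ulim x - u n x| ^ h x ∂μ)
          - ∫ x, |ulim x| ^ h x ∂μ := by rw [integral_sub (hmod n) (hD n)]
  rw [Real.dist_eq]
  calc |(∫ x, |u n x| ^ h x ∂μ) - (∫ x, |ulim x - u n x| ^ h x ∂μ)
      - (∫ x, |ulim x| ^ h x ∂μ)|
      = |∫ x, (|u n x| ^ h x - |ulim x - u n x| ^ h x - |ulim x| ^ h x) ∂μ| := by
        rw [hsplit]
    _ ≤ ∫ x, |(|u n x| ^ h x - |ulim x - u n x| ^ h x - |ulim x| ^ h x)| ∂μ := by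
        have := norm_integral_le_integral_norm (μ := μ)
          (fun x => |u n x| ^ h x - |ulim x - u n x| ^ h x - |ulim x| ^ h x)
        simpa [Real.norm_eq_abs] using this
    _ ≤ (∫ x, W n x ∂μ) + ε * K' := hgI
    _ < δ / 2 + δ / 2 := by
        have := hεK'
        linarith
    _ = δ := by ring
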